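/- Let s ≥ 1 be an integer, r ∈ [0,1], and let I_1,…,I_s be independent Bernoulli random variables with Pr[I_j = 1] ≥ r for each j. Then Pr[∑_{j=1}^s I_j ≤ 1] ≤ (1 − r²)^{s−1}. -/

import Mathlib

open MeasureTheory ProbabilityTheory

/-- **Binomial domination for independent Bernoulli indicators.**
If `I 1, …, I s` are independent `{0,1}`-valued random variables with
`Pr[I j = 1] ≥ r` for each `j`, where `s ≥ 1` and `r ∈ [0,1]`, then
`Pr[∑ j, I j ≤ 1] ≤ (1 − r²)^{s−1}`. -/
theorem bernoulli_sum_le_one_bound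
    {Ω : Type*} [MeasurableSpace Ω] (μ : Measure Ω) [IsProbabilityMeasure μ]
    (s : ℕ) (hs : 1 ≤ s) (r : ℝ) (hr0 : 0 ≤ r) (hr1 : r ≤ 1)
    (I : Fin s → Ω → ℕ) (hmeas : ∀ j, Measurable (I j))
    (h01 : ∀ j ω, I j ω = 0 ∨ I j ω = 1)
    (hindep : iIndepFun I μ)
    (hlb : ∀ j, ENNReal.ofReal r ≤ μ {ω | I j ω = 1}) :
    μ {ω | ∑ j, I j ω ≤ 1} ≤ ENNReal.ofReal ((1 - r ^ 2) ^ (s - 1)) := by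
  have hr1' : (0:ℝ) ≤ 1 - r := by linarith
  have hr2' : (0:ℝ) ≤ 1 - r ^ 2 := by nlinarith
  have hrle : (1:ℝ) - r ≤ 1 - r ^ 2 := by nlinarith
  -- each I j takes value 0 with probability ≤ 1 - r
  have hI0 : ∀ j, μ {ω | I j ω = 0} ≤ ENNReal.ofReal (1 - r) := by
    intro j
    have hdis : Disjoint {ω | I j ω = 0} {ω | I j ω = 1} := by
      rw [Set.disjoint_left]; intro ω h0 h1; simp only [Set.mem_setOf_eq] at h0 h1; omega
    have hm1 : MeasurableSet {ω | I j ω = 1} := hmeas j (measurableSet_singleton 1)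
    have huniv : {ω | I j ω = 0} ∪ {ω | I j ω = 1} = Set.univ := by
      ext ω; simp only [Set.mem_union, Set.mem_setOf_eq, Set.mem_univ, iff_true]
      exact h01 j ω
    have hsum : μ {ω | I j ω = 0} + μ {ω | I j ω = 1} = 1 := by
      rw [← measure_union hdis hm1, huniv, measure_univ]
    have h1 : μ {ω | I j ω = 0} + ENNReal.ofReal r ≤
        ENNReal.ofReal (1 - r) + ENNReal.ofReal r := by
      calc μ {ω | I j ω = 0} + ENNReal.ofReal r ≤
          μ {ω | I j ω = 0} + μ {ω | I j ω = 1} := by gcongr; exact hlb j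
        _ = 1 := hsum
        _ = ENNReal.ofReal (1 - r) + ENNReal.ofReal r := by
            rw [← ENNReal.ofReal_add hr1' hr0]; norm_num
    exact (ENNReal.add_le_add_iff_right ENNReal.ofReal_ne_top).mp h1
  set S : ℕ → Ω → ℕ := fun k ω => ∑ j ∈ Finset.univ.filter (fun j : Fin s => (j : ℕ) < k), I j ω
    with hSdef
  have hSmeas : ∀ k, Measurable (S k) := fun k =>
    Finset.measurable_sum _ (fun j _ => hmeas j)
  have key : ∀ k, 1 ≤ k → k ≤ s →
      μ {ω | S k ω ≤ 1} ≤ ENNReal.ofReal ((1 - r ^ 2) ^ (k - 1)) ∧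
      μ {ω | S k ω = 0} ≤ ENNReal.ofReal ((1 - r) ^ k) := by
    intro k
    induction k with
    | zero => intro h; omega
    | succ k ih =>
      intro _ hk1
      rcases Nat.eq_zero_or_pos k with hk0 | hkpos
      · -- base case k + 1 = 1
        subst hk0
        have hfil : Finset.univ.filter (fun j : Fin s => (j : ℕ) < 1) =
            {(⟨0, hs⟩ : Fin s)} := by
          ext j
          simp only [Finset.mem_filter, Finset.mem_univ, true_and, Finset.mem_singleton]
          constructor
          · intro h; exact Fin.ext (by show (j:ℕ) = 0; omega)
          · intro h; subst h; exact Nat.zero_lt_one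
        have hS1 : ∀ ω, S 1 ω = I ⟨0, hs⟩ ω := by
          intro ω
          show ∑ j ∈ Finset.univ.filter (fun j : Fin s => (j : ℕ) < 1), I j ω = I ⟨0, hs⟩ ω
          rw [hfil, Finset.sum_singleton]
        constructor
        · simp only [Nat.sub_self, pow_zero, ENNReal.ofReal_one]
          exact prob_le_one
        · have : {ω | S 1 ω = 0} = {ω | I ⟨0, hs⟩ ω = 0} := by
            ext ω; simp [hS1 ω]
          rw [this, pow_one]
          exact hI0 _
      · -- inductive step, k ≥ 1
        obtain ⟨m, rfl⟩ : ∃ m, k = m + 1 := ⟨k - 1, (Nat.succ_pred_eq_of_pos hkpos).symm⟩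
        set k := m + 1 with hkdef
        have hks : k < s := by omega
        obtain ⟨hA, hB⟩ := ih (by omega) (by omega)
        rw [hkdef, Nat.add_sub_cancel] at hA
        set idx : Fin s := ⟨k, hks⟩ with hidx
        have hnot : idx ∉ Finset.univ.filter (fun j : Fin s => (j : ℕ) < k) := by
          simp only [Finset.mem_filter, Finset.mem_univ, true_and, hidx]
          exact lt_irrefl k
        have hins : Finset.univ.filter (fun j : Fin s => (j : ℕ) < k + 1) =
            insert idx (Finset.univ.filter (fun j : Fin s => (j : ℕ) < k)) := by
          ext j
          simp only [Finset.mem_filter, Finset.mem_univ, true_and, Finset.mem_insert]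
          constructor
          · intro h
            rcases Nat.lt_succ_iff_lt_or_eq.mp h with h | h
            · exact Or.inr h
            · exact Or.inl (Fin.ext h)
          · rintro (h | h)
            · subst h; exact Nat.lt_succ_self k
            · omega
        have hsump : ∀ ω, S (k + 1) ω = I idx ω + S k ω := by
          intro ω
          show ∑ j ∈ Finset.univ.filter (fun j : Fin s => (j : ℕ) < k + 1), I j ω = _
          rw [hins, Finset.sum_insert hnot]
        have hSk : S k = ∑ j ∈ Finset.univ.filter (fun j : Fin s => (j : ℕ) < k), I j := by
          ext ω; simp [Finset.sum_apply]; rfl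
        have hind2 : IndepFun (S k) (I idx) μ := by
          rw [hSk]
          exact hindep.indepFun_finsetSum_of_notMem hmeas hnot
        have hmul : ∀ (a b : ℕ), μ ({ω | S k ω = a} ∩ {ω | I idx ω = b}) =
            μ {ω | S k ω = a} * μ {ω | I idx ω = b} := by
          intro a b
          exact hind2.measure_inter_preimage_eq_mul {a} {b}
            (measurableSet_singleton a) (measurableSet_singleton b)
        have hsetle : {ω | S (k + 1) ω ≤ 1} =
            {ω | S k ω = 0} ∪ ({ω | S k ω = 1} ∩ {ω | I idx ω = 0}) := by
          ext ω
          simp only [Set.mem_setOf_eq, Set.mem_union, Set.mem_inter_iff, hsump ω]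
          rcases h01 idx ω with h | h <;> omega
        have hset0 : {ω | S (k + 1) ω = 0} = {ω | S k ω = 0} ∩ {ω | I idx ω = 0} := by
          ext ω
          simp only [Set.mem_setOf_eq, Set.mem_inter_iff, hsump ω]
          omega
        have hA01 : μ {ω | S k ω = 0} + μ {ω | S k ω = 1} ≤ μ {ω | S k ω ≤ 1} := by
          have hdis : Disjoint {ω | S k ω = 0} {ω | S k ω = 1} := by
            rw [Set.disjoint_left]; intro ω h0 h1
            simp only [Set.mem_setOf_eq] at h0 h1; omega
          have hm1 : MeasurableSet {ω | S k ω = 1} := hSmeas k (measurableSet_singleton 1)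
          rw [← measure_union hdis hm1]
          apply measure_mono
          intro ω hω
          rcases hω with h | h <;> simp only [Set.mem_setOf_eq] at h ⊢ <;> omega
        -- the real-number inequality
        have hreal : (1 - r) ^ k * r + (1 - r ^ 2) ^ m * (1 - r) ≤ (1 - r ^ 2) ^ k := by
          have hpow : (1 - r) ^ m ≤ (1 - r ^ 2) ^ m := pow_le_pow_left₀ hr1' hrle m
          have h1 : (1 - r) ^ k * r ≤ (r - r ^ 2) * (1 - r ^ 2) ^ m := by
            have he : (1 - r) ^ k * r = (r - r ^ 2) * (1 - r) ^ m := by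
              rw [hkdef, pow_succ]; ring
            rw [he]
            exact mul_le_mul_of_nonneg_left hpow (by nlinarith)
          have h2 : (r - r ^ 2) * (1 - r ^ 2) ^ m + (1 - r ^ 2) ^ m * (1 - r) =
              (1 - r ^ 2) ^ k := by
            rw [hkdef, pow_succ]; ring
          linarith
        constructor
        · -- first invariant
          calc μ {ω | S (k + 1) ω ≤ 1}
              ≤ μ {ω | S k ω = 0} + μ ({ω | S k ω = 1} ∩ {ω | I idx ω = 0}) := by
                rw [hsetle]; exact measure_union_le _ _
            _ = μ {ω | S k ω = 0} + μ {ω | S k ω = 1} * μ {ω | I idx ω = 0} := by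
                rw [hmul 1 0]
            _ ≤ μ {ω | S k ω = 0} + μ {ω | S k ω = 1} * ENNReal.ofReal (1 - r) := by
                gcongr; exact hI0 idx
            _ = μ {ω | S k ω = 0} * ENNReal.ofReal r +
                (μ {ω | S k ω = 0} + μ {ω | S k ω = 1}) * ENNReal.ofReal (1 - r) := by
                rw [add_mul]
                have hsplit : μ {ω | S k ω = 0} =
                    μ {ω | S k ω = 0} * ENNReal.ofReal r +
                    μ {ω | S k ω = 0} * ENNReal.ofReal (1 - r) := by
                  rw [← mul_add, ← ENNReal.ofReal_add hr0 hr1']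
                  norm_num
                rw [← add_assoc, ← hsplit]
            _ ≤ ENNReal.ofReal ((1 - r) ^ k) * ENNReal.ofReal r +
                ENNReal.ofReal ((1 - r ^ 2) ^ m) * ENNReal.ofReal (1 - r) := by
                exact add_le_add (mul_le_mul_left hB _)
                  (mul_le_mul_left (hA01.trans hA) _)
            _ = ENNReal.ofReal ((1 - r) ^ k * r + (1 - r ^ 2) ^ m * (1 - r)) := by
                rw [← ENNReal.ofReal_mul (by positivity), ← ENNReal.ofReal_mul (by positivity),
                  ← ENNReal.ofReal_add (by positivity) (by positivity)]
            _ ≤ ENNReal.ofReal ((1 - r ^ 2) ^ (k + 1 - 1)) := by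
                rw [Nat.add_sub_cancel]
                exact ENNReal.ofReal_le_ofReal hreal
        · -- second invariant
          calc μ {ω | S (k + 1) ω = 0}
              = μ {ω | S k ω = 0} * μ {ω | I idx ω = 0} := by rw [hset0, hmul 0 0]
            _ ≤ ENNReal.ofReal ((1 - r) ^ k) * ENNReal.ofReal (1 - r) :=
                mul_le_mul' hB (hI0 idx)
            _ = ENNReal.ofReal ((1 - r) ^ (k + 1)) := by
                rw [← ENNReal.ofReal_mul (by positivity)]
                congr 1
  have hfin : Finset.univ.filter (fun j : Fin s => (j : ℕ) < s) = Finset.univ := by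
    ext j; simp [j.isLt]
  have hfinal : {ω | ∑ j, I j ω ≤ 1} = {ω | S s ω ≤ 1} := by
    ext ω
    have : S s ω = ∑ j, I j ω := by
      show ∑ j ∈ Finset.univ.filter (fun j : Fin s => (j : ℕ) < s), I j ω = _
      rw [hfin]
    simp [this]
  rw [hfinal]
  exact (key s hs le_rfl).1
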